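/- arXiv:1503.08290 — 2 statements merged into one kernel-verified Lean document; each statement's English description precedes it below -/
import Mathlib

section
/- Let Ψ : F → F be a ℂ-algebra homomorphism such that Ψ(x₁) = a₁₁·x₁ + a₂₁·x₂ and Ψ(x₂) = a₁₂·x₁ + a₂₂·x₂ for complex numbers a₁₁, a₁₂, a₂₁, a₂₂. Then a₁₁·a₂₁·(a₁₁ − a₂₁) = 0 and a₁₂·a₂₂·(a₁₂ − a₂₂) = 0. -/
noncomputable section

open MvPolynomial

/-- The relations ideal for the cohomology of the flag manifold `SU(3)/T`. -/
def Frel : Ideal (MvPolynomial (Fin 2) ℂ) :=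
  Ideal.span {X 0 ^ 2 + X 1 ^ 2 + X 0 * X 1, X 0 ^ 2 * X 1 + X 0 * X 1 ^ 2}

/-- `F = ℂ[x₁,x₂]/(x₁²+x₂²+x₁x₂, x₁²x₂+x₁x₂²)`. -/
abbrev F := MvPolynomial (Fin 2) ℂ ⧸ Frel

def x₁ : F := Ideal.Quotient.mk Frel (X 0)
def x₂ : F := Ideal.Quotient.mk Frel (X 1)

/-- The degree-2 part of `F`. -/
def deg2F : Submodule ℂ F := Submodule.span ℂ {x₁, x₂}

/-- The relations ideal for `H_u = F[y]/(y² + u·y)`. -/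
def Hrel (u : F) : Ideal (Polynomial F) :=
  Ideal.span {Polynomial.X ^ 2 + Polynomial.C u * Polynomial.X}

instance (u : F) : (Hrel u).IsTwoSided := ⟨fun b ha ↦ mul_comm b _ ▸ (Hrel u).smul_mem _ ha⟩

/-- `H_u = F[y]/(y² + u·y)`. -/
abbrev H (u : F) := Polynomial F ⧸ Hrel u

/-- The class `y` in `H_u`. -/
def yH (u : F) : H u := Ideal.Quotient.mk (Hrel u) Polynomial.X

/-- The canonical map `F → H_u`, as a `ℂ`-algebra homomorphism. -/
def ιH (u : F) : F →ₐ[ℂ] H u :=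
  (Ideal.Quotient.mkₐ ℂ (Hrel u)).comp (IsScalarTower.toAlgHom ℂ F (Polynomial F))

/-- The degree-2 part of `H_u`. -/
def deg2H (u : F) : Submodule ℂ (H u) :=
  Submodule.span ℂ {ιH u x₁, ιH u x₂, yH u}

/-- `ω` acts on degree 2 by the matrix `(a₁₁ a₁₂; a₂₁ a₂₂)`. -/
def actsAs (ω : F ≃ₐ[ℂ] F) (a₁₁ a₁₂ a₂₁ a₂₂ : ℂ) : Prop :=
  ω x₁ = a₁₁ • x₁ + a₂₁ • x₂ ∧ ω x₂ = a₁₂ • x₁ + a₂₂ • x₂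

/-- Membership in the Weyl group `W` (the six listed automorphisms). -/
def InW (ω : F ≃ₐ[ℂ] F) : Prop :=
  actsAs ω 1 0 0 1 ∨ actsAs ω 0 1 1 0 ∨ actsAs ω (-1) 0 (-1) 1 ∨
    actsAs ω 1 (-1) 0 (-1) ∨ actsAs ω 0 (-1) 1 (-1) ∨ actsAs ω (-1) 1 (-1) 0


namespace Stmt3Aux

open Finsupp

def ee (a b : ℕ) : Fin 2 →₀ ℕ := single 0 a + single 1 b

lemma ee_apply0 (a b : ℕ) : ee a b 0 = a := by simp [ee, single_apply]
lemma ee_apply1 (a b : ℕ) : ee a b 1 = b := by simp [ee, single_apply]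

lemma ee_le_ee {a b c d : ℕ} : ee a b ≤ ee c d ↔ a ≤ c ∧ b ≤ d := by
  rw [Finsupp.le_def]
  constructor
  · intro h; exact ⟨by simpa [ee_apply0] using h 0, by simpa [ee_apply1] using h 1⟩
  · rintro ⟨h1, h2⟩ i
    fin_cases i <;> simpa [ee_apply0, ee_apply1]

lemma ee_sub_ee (a b c d : ℕ) : ee a b - ee c d = ee (a - c) (b - d) := by
  ext i; fin_cases i <;> simp [Finsupp.sub_apply, ee_apply0, ee_apply1]

lemma key : (X 0 ^ 2 * X 1 : MvPolynomial (Fin 2) ℂ) ∉ Frel := by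
  intro h
  rw [Frel, Ideal.mem_span_pair] at h
  obtain ⟨u, v, huv⟩ := h
  have hc := congrArg (fun p => coeff (ee 2 1) p - coeff (ee 1 2) p) huv
  simp only [mul_add, coeff_add] at hc
  rw [show (X 0 ^ 2 * X 1 : MvPolynomial (Fin 2) ℂ) = monomial (ee 2 1) 1 by
        rw [ee, X_pow_eq_monomial, X, monomial_mul]; simp,
      show (X 0 * X 1 ^ 2 : MvPolynomial (Fin 2) ℂ) = monomial (ee 1 2) 1 by
        rw [ee, X_pow_eq_monomial, X, monomial_mul]; simp,
      show (X 0 ^ 2 : MvPolynomial (Fin 2) ℂ) = monomial (ee 2 0) 1 by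
        simp [ee, X_pow_eq_monomial],
      show (X 1 ^ 2 : MvPolynomial (Fin 2) ℂ) = monomial (ee 0 2) 1 by
        simp [ee, X_pow_eq_monomial],
      show (X 0 * X 1 : MvPolynomial (Fin 2) ℂ) = monomial (ee 1 1) 1 by
        rw [ee, X, X, monomial_mul]; simp] at hc
  simp only [coeff_mul_monomial', ee_le_ee, ee_sub_ee, mul_one] at hc
  have hne : ee 2 1 ≠ ee 1 2 := fun h => by
    have := congrArg (fun m => m 0) h; simp [ee_apply0] at this
  simp only [coeff_monomial, if_pos rfl, if_neg hne] at hc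
  norm_num at hc
  exact one_ne_zero (α := ℂ) (by linear_combination -hc)

lemma hrel1 : x₁ ^ 2 + x₂ ^ 2 + x₁ * x₂ = 0 := by
  rw [x₁, x₂, ← map_pow, ← map_pow, ← map_mul, ← map_add, ← map_add,
    Ideal.Quotient.eq_zero_iff_mem]
  exact Ideal.subset_span (by simp)

lemma hrel2 : x₁ ^ 2 * x₂ + x₁ * x₂ ^ 2 = 0 := by
  rw [x₁, x₂, ← map_pow, ← map_pow, ← map_mul, ← map_mul, ← map_add,
    Ideal.Quotient.eq_zero_iff_mem]
  exact Ideal.subset_span (by simp)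

lemma hx13 : x₁ ^ 3 = 0 := by linear_combination x₁ * hrel1 - hrel2
lemma hx23 : x₂ ^ 3 = 0 := by linear_combination x₂ * hrel1 - hrel2

lemma hx12 : x₁ ^ 2 * x₂ ≠ 0 := by
  rw [x₁, x₂, ← map_pow, ← map_mul, Ne, Ideal.Quotient.eq_zero_iff_mem]
  exact key

lemma main (a b : ℂ) (h : (a • x₁ + b • x₂) ^ 3 = 0) : a * b * (a - b) = 0 := by
  rw [Algebra.smul_def a x₁, Algebra.smul_def b x₂] at h
  set A := algebraMap ℂ F a with hA
  set B := algebraMap ℂ F b with hB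
  have h2 : algebraMap ℂ F (3 * a ^ 2 * b - 3 * a * b ^ 2) * (x₁ ^ 2 * x₂) = 0 := by
    rw [map_sub, map_mul, map_mul, map_mul, map_mul, map_pow, map_pow, map_ofNat, ← hA, ← hB]
    linear_combination h - A ^ 3 * hx13 - B ^ 3 * hx23 - 3 * A * B ^ 2 * hrel2
  by_cases hc : (3 * a ^ 2 * b - 3 * a * b ^ 2 : ℂ) = 0
  · linear_combination (1 / 3 : ℂ) * hc
  · exfalso
    apply hx12
    have h3 : (1 : F) * (x₁ ^ 2 * x₂) = 0 := by
      rw [← map_one (algebraMap ℂ F), ← inv_mul_cancel₀ hc, map_mul, mul_assoc, h2, mul_zero]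
    simpa using h3

end Stmt3Aux

/-- If `Ψ : F → F` is a `ℂ`-algebra homomorphism with
`Ψ(x₁) = a₁₁·x₁ + a₂₁·x₂` and `Ψ(x₂) = a₁₂·x₁ + a₂₂·x₂`, then
`a₁₁·a₂₁·(a₁₁ − a₂₁) = 0` and `a₁₂·a₂₂·(a₁₂ − a₂₂) = 0`. -/
theorem stmt3 (Ψ : F →ₐ[ℂ] F) (a₁₁ a₁₂ a₂₁ a₂₂ : ℂ)
    (h1 : Ψ x₁ = a₁₁ • x₁ + a₂₁ • x₂) (h2 : Ψ x₂ = a₁₂ • x₁ + a₂₂ • x₂) :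
    a₁₁ * a₂₁ * (a₁₁ - a₂₁) = 0 ∧ a₁₂ * a₂₂ * (a₁₂ - a₂₂) = 0 := by
  constructor
  · apply Stmt3Aux.main
    rw [← h1, ← map_pow, Stmt3Aux.hx13, map_zero]
  · apply Stmt3Aux.main
    rw [← h2, ← map_pow, Stmt3Aux.hx23, map_zero]
end
end

section
/- Let l₁, l₂, l₃ be pairwise distinct integers and a, b complex numbers. If the polynomial (a·x + b·y)⁴ lies in the ideal of ℂ[x,y] generated by x⁴ and (y + l₁·x)·(y + l₂·x)·(y + l₃·x), then b = 0. -/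
open MvPolynomial

private lemma pow4_inj {x y : ℝ} (hx : 0 ≤ x) (hy : 0 ≤ y) (h : x^4 = y^4) : x = y := by
  rcases lt_trichotomy x y with hc | hc | hc
  · exact absurd h (ne_of_lt (pow_lt_pow_left₀ hc hx (by norm_num)))
  · exact hc
  · exact absurd h.symm (ne_of_lt (pow_lt_pow_left₀ hc hy (by norm_num)))

/-- Let `l₁, l₂, l₃` be pairwise distinct integers and `a, b` complex
numbers. If `(a·x + b·y)⁴` lies in the ideal of `ℂ[x,y]` generated by `x⁴` and
`(y+l₁·x)(y+l₂·x)(y+l₃·x)`, then `b = 0`. -/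
theorem stmt16 (l : Fin 3 → ℤ) (hl : Function.Injective l) (a b : ℂ)
    (h : (a • X 0 + b • X 1 : MvPolynomial (Fin 2) ℂ) ^ 4 ∈
      Ideal.span {(X 0 : MvPolynomial (Fin 2) ℂ) ^ 4,
        ∏ i : Fin 3, (X 1 + (l i : ℂ) • X 0)}) :
    b = 0 := by
  rw [Ideal.mem_span_pair] at h
  obtain ⟨p, q, hpq⟩ := h
  have hmain := congrArg (aeval ![Polynomial.X, Polynomial.C Polynomial.X] :
      MvPolynomial (Fin 2) ℂ →ₐ[ℂ] Polynomial (Polynomial ℂ)) hpq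
  simp only [map_add, map_mul, map_pow, map_smul, Fin.prod_univ_three, aeval_X,
    Matrix.cons_val_zero, Matrix.cons_val_one, Matrix.head_cons] at hmain
  obtain ⟨P, hP⟩ : ∃ P, (aeval ![Polynomial.X, Polynomial.C Polynomial.X] :
      MvPolynomial (Fin 2) ℂ →ₐ[ℂ] Polynomial (Polynomial ℂ)) p = P := ⟨_, rfl⟩
  obtain ⟨Q, hQ⟩ : ∃ Q, (aeval ![Polynomial.X, Polynomial.C Polynomial.X] :
      MvPolynomial (Fin 2) ℂ →ₐ[ℂ] Polynomial (Polynomial ℂ)) q = Q := ⟨_, rfl⟩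
  rw [hP, hQ] at hmain
  clear hpq hP hQ p q
  have hsm : ∀ (c : ℂ) (r : Polynomial (Polynomial ℂ)),
      c • r = Polynomial.C (Polynomial.C c) * r := by
    intro c r
    rw [Algebra.smul_def]
    rfl
  rw [hsm, hsm, hsm, hsm, hsm] at hmain
  set e1 : ℂ := (l 0 : ℂ) + (l 1 : ℂ) + (l 2 : ℂ) with he1
  set e2 : ℂ := (l 0 : ℂ) * (l 1 : ℂ) + (l 0 : ℂ) * (l 2 : ℂ) + (l 1 : ℂ) * (l 2 : ℂ) with he2
  set e3 : ℂ := (l 0 : ℂ) * (l 1 : ℂ) * (l 2 : ℂ) with he3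
  have hE : P * Polynomial.X ^ 4 + ((Q * Polynomial.C (Polynomial.X ^ 3))
        + (Q * Polynomial.C (Polynomial.C e1 * Polynomial.X ^ 2)) * Polynomial.X ^ 1
        + (Q * Polynomial.C (Polynomial.C e2 * Polynomial.X ^ 1)) * Polynomial.X ^ 2
        + (Q * Polynomial.C (Polynomial.C e3)) * Polynomial.X ^ 3)
      = Polynomial.C (Polynomial.C (b^4) * Polynomial.X ^ 4)
        + Polynomial.C (Polynomial.C (4*a*b^3) * Polynomial.X ^ 3) * Polynomial.X ^ 1
        + Polynomial.C (Polynomial.C (6*a^2*b^2) * Polynomial.X ^ 2) * Polynomial.X ^ 2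
        + Polynomial.C (Polynomial.C (4*a^3*b) * Polynomial.X ^ 1) * Polynomial.X ^ 3
        + Polynomial.C (Polynomial.C (a^4)) * Polynomial.X ^ 4 := by
    simp only [he1, he2, he3, map_add, map_mul, map_pow, map_ofNat]
    linear_combination hmain
  have s0 := congrArg (fun F => (Polynomial.coeff F 0).coeff 4) hE
  have s1 := congrArg (fun F => (Polynomial.coeff F 1).coeff 3) hE
  have s2 := congrArg (fun F => (Polynomial.coeff F 2).coeff 2) hE
  have s3 := congrArg (fun F => (Polynomial.coeff F 3).coeff 1) hE
  simp only [← mul_assoc, Polynomial.coeff_add, Polynomial.coeff_mul_C,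
    Polynomial.coeff_mul_X_pow', Polynomial.coeff_C_mul, Polynomial.coeff_X_pow,
    Polynomial.coeff_C, Nat.reduceLeDiff, reduceIte, Nat.reduceSub] at s0 s1 s2 s3
  norm_num at s0 s1 s2 s3
  set A : ℂ := (Q.coeff 0).coeff 1 with hA
  set B : ℂ := (Q.coeff 1).coeff 0 with hB
  -- key identities : (a - lᵢ·b)⁴ = a⁴ - e₃·B
  have K0 : (a - (l 0 : ℂ) * b)^4 = a^4 - e3 * B := by
    simp only [he1, he2, he3] at s0 s1 s2 s3 ⊢
    linear_combination (-((l 0 : ℂ))^4) * s0 + ((l 0 : ℂ))^3 * s1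
      - ((l 0 : ℂ))^2 * s2 + ((l 0 : ℂ)) * s3
  have K1 : (a - (l 1 : ℂ) * b)^4 = a^4 - e3 * B := by
    simp only [he1, he2, he3] at s0 s1 s2 s3 ⊢
    linear_combination (-((l 1 : ℂ))^4) * s0 + ((l 1 : ℂ))^3 * s1
      - ((l 1 : ℂ))^2 * s2 + ((l 1 : ℂ)) * s3
  have K2 : (a - (l 2 : ℂ) * b)^4 = a^4 - e3 * B := by
    simp only [he1, he2, he3] at s0 s1 s2 s3 ⊢
    linear_combination (-((l 2 : ℂ))^4) * s0 + ((l 2 : ℂ))^3 * s1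
      - ((l 2 : ℂ))^2 * s2 + ((l 2 : ℂ)) * s3
  -- derive equality of norms
  have hnorm : ∀ i j : Fin 3, (a - (l i : ℂ) * b)^4 = (a - (l j : ℂ) * b)^4 →
      Complex.normSq (a - (l i : ℂ) * b) = Complex.normSq (a - (l j : ℂ) * b) := by
    intro i j hij
    have h4 := congrArg (fun z : ℂ => ‖z‖) hij
    rw [norm_pow, norm_pow] at h4
    have := pow4_inj (norm_nonneg _) (norm_nonneg _) h4
    rw [← Complex.sq_norm, ← Complex.sq_norm, this]
  have N01 := hnorm 0 1 (K0.trans K1.symm)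
  have N02 := hnorm 0 2 (K0.trans K2.symm)
  -- pass to real coordinates
  simp only [Complex.normSq_apply, Complex.sub_re, Complex.sub_im, Complex.mul_re,
    Complex.mul_im, Complex.intCast_re, Complex.intCast_im, zero_mul, mul_zero,
    sub_zero, zero_add, add_zero] at N01 N02
  have h01 : (l 0 : ℝ) ≠ (l 1 : ℝ) := by
    exact_mod_cast fun hc => (by decide : (0 : Fin 3) ≠ 1) (hl (by exact_mod_cast hc))
  have h02 : (l 0 : ℝ) ≠ (l 2 : ℝ) := by
    exact_mod_cast fun hc => (by decide : (0 : Fin 3) ≠ 2) (hl (by exact_mod_cast hc))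
  have h12 : (l 1 : ℝ) ≠ (l 2 : ℝ) := by
    exact_mod_cast fun hc => (by decide : (1 : Fin 3) ≠ 2) (hl (by exact_mod_cast hc))
  have t1 : 2*(a.re*b.re + a.im*b.im) = ((l 0 : ℝ) + (l 1 : ℝ)) * (b.re^2 + b.im^2) := by
    apply mul_left_cancel₀ (sub_ne_zero.mpr h01)
    linear_combination -N01
  have t2 : 2*(a.re*b.re + a.im*b.im) = ((l 0 : ℝ) + (l 2 : ℝ)) * (b.re^2 + b.im^2) := by
    apply mul_left_cancel₀ (sub_ne_zero.mpr h02)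
    linear_combination -N02
  have hN : b.re^2 + b.im^2 = 0 := by
    have := mul_left_cancel₀ (sub_ne_zero.mpr h12)
      (show ((l 1 : ℝ) - (l 2 : ℝ)) * (b.re^2 + b.im^2) = ((l 1 : ℝ) - (l 2 : ℝ)) * 0 by
        linear_combination t2 - t1)
    exact this
  have hre : b.re = 0 := by nlinarith [sq_nonneg b.re, sq_nonneg b.im]
  have him : b.im = 0 := by nlinarith [sq_nonneg b.re, sq_nonneg b.im]
  exact Complex.ext hre him
end
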